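/- Let f_φ(z) = log(q_φ(z)/p(x,z)) and let ∂_{φ_i} log q_φ denote the i-th component of the score. Define the optimal control variate coefficient a*_i = Cov_{q_φ}(f_φ ∂_{φ_i} log q_φ, ∂_{φ_i} log q_φ) / Var_{q_φ}(∂_{φ_i} log q_φ). Then a*_i = E_{q_φ}[f_φ] + δ_i, where δ_i = Cov_{q_φ}(f_φ, (∂_{φ_i} log q_φ)²) / Var_{q_φ}(∂_{φ_i} log q_φ). -/

import Mathlib

open MeasureTheory

/-- Decomposition of the optimal control variate coefficient: with `A = f_φ` and
`B = ∂_{φ_i} log q_φ` (under the distribution `μ` of `z ∼ q_φ`), if `E[B] = 0` and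
`Var(B) > 0`, then
`a* = Cov(A·B, B)/Var(B) = E[A] + δ` where `δ = Cov(A, B²)/Var(B)`. -/
theorem optimal_cv_decomposition {Ω : Type*} [MeasurableSpace Ω]
    (μ : Measure Ω) [IsProbabilityMeasure μ] (A B : Ω → ℝ)
    (hA : Integrable A μ) (hB : Integrable B μ)
    (hAB : Integrable (fun ω => A ω * B ω) μ)
    (hB2 : Integrable (fun ω => (B ω) ^ 2) μ)
    (hAB2 : Integrable (fun ω => A ω * (B ω) ^ 2) μ)
    (hABB : Integrable (fun ω => (A ω * B ω) * B ω) μ)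
    (hB0 : ∫ ω, B ω ∂μ = 0)
    (hVarpos : 0 < (∫ ω, (B ω) ^ 2 ∂μ) - (∫ ω, B ω ∂μ) ^ 2) :
    ((∫ ω, (A ω * B ω) * B ω ∂μ) - (∫ ω, A ω * B ω ∂μ) * (∫ ω, B ω ∂μ))
        / ((∫ ω, (B ω) ^ 2 ∂μ) - (∫ ω, B ω ∂μ) ^ 2)
      = (∫ ω, A ω ∂μ)
        + ((∫ ω, A ω * (B ω) ^ 2 ∂μ) - (∫ ω, A ω ∂μ) * (∫ ω, (B ω) ^ 2 ∂μ))
          / ((∫ ω, (B ω) ^ 2 ∂μ) - (∫ ω, B ω ∂μ) ^ 2) := by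
  have hpt : (∫ ω, (A ω * B ω) * B ω ∂μ) = ∫ ω, A ω * (B ω) ^ 2 ∂μ := by
    congr 1; funext ω; ring
  rw [hpt, hB0] at *
  simp only [mul_zero, sub_zero, ne_eq, pow_two, zero_mul] at *
  field_simp
  have hne : (∫ ω, B ω ^ 2 ∂μ) ≠ 0 := by simp only [pow_two]; exact ne_of_gt hVarpos
  rw [add_div' _ _ _ hne]
  congr 1; ring
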